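/- Under the assumptions of the basic consistency lemma (uniform convergence of the empirical CDF of the oracle scores to a continuous Lipschitz CDF G, and consistency of the estimated scores in aggregate φ-norm), the conformal prediction set Ĉ = {y : p̂(y) > α} with p̂(y) = (T+1)^{-1}∑_{t=1}^{T+1} 1{V̂_t^{(y)} ≥ V̂_{T+1}^{(y)}} satisfies P(Y_{T+1} ∈ Ĉ(X_{T+1})) = 1 − α + o(1). -/

import Mathlib

open MeasureTheory Filter Finset

private lemma dcp_core (T : ℕ) (v vh : ℕ → ℝ) (G φ : ℝ → ℝ) (W ε δ : ℝ)
    (hδ : 0 < δ) (hW : 0 ≤ W)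
    (hlip : ∀ v1 v2 : ℝ, |G v1 - G v2| ≤ W * |v1 - v2|)
    (hφ0 : φ 0 = 0) (hφmono : StrictMonoOn φ (Set.Ici 0))
    (ha : ∀ x : ℝ, |((T:ℝ)+1)⁻¹ * ∑ t ∈ range (T+1), (if v t < x then (1:ℝ) else 0) - G x| < ε)
    (hb : ((T:ℝ)+1)⁻¹ * ∑ t ∈ range (T+1), φ |vh t - v t| < ε * φ δ)
    (hc : |vh T - v T| < δ) :
    |((T:ℝ)+1)⁻¹ * ∑ t ∈ range (T+1), (if vh T ≤ vh t then (1:ℝ) else 0)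
      - (1 - G (v T))| ≤ 2*(ε + W*δ) := by
  set N : ℝ := (T:ℝ) + 1 with hN
  have hNpos : 0 < N := by positivity
  have hφδ : 0 < φ δ := by
    have := hφmono (Set.self_mem_Ici) (Set.mem_Ici.2 hδ.le) hδ
    rwa [hφ0] at this
  have hφnonneg : ∀ x : ℝ, 0 ≤ φ |x| := by
    intro x
    rcases eq_or_lt_of_le (abs_nonneg x) with h | h
    · rw [← h, hφ0]
    · have := hφmono Set.self_mem_Ici (Set.mem_Ici.2 (abs_nonneg x)) h
      rw [hφ0] at this; exact this.le
  set bad : Finset ℕ := (range (T+1)).filter (fun t => δ ≤ |vh t - v t|) with hbad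
  have hbadcard : (bad.card : ℝ) * φ δ ≤ ∑ t ∈ range (T+1), φ |vh t - v t| := by
    calc (bad.card : ℝ) * φ δ = ∑ _t ∈ bad, φ δ := by rw [sum_const, nsmul_eq_mul]
    _ ≤ ∑ t ∈ bad, φ |vh t - v t| := by
        refine sum_le_sum fun t ht => ?_
        have h1 : δ ≤ |vh t - v t| := (mem_filter.1 ht).2
        rcases eq_or_lt_of_le h1 with h | h
        · rw [h]
        · exact (hφmono (Set.mem_Ici.2 hδ.le) (Set.mem_Ici.2 (abs_nonneg _)) h).le
    _ ≤ ∑ t ∈ range (T+1), φ |vh t - v t| :=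
        sum_le_sum_of_subset_of_nonneg (filter_subset _ _) (fun t _ _ => hφnonneg _)
  have hfrac : N⁻¹ * bad.card < ε := by
    have h1 : N⁻¹ * ((bad.card:ℝ) * φ δ) ≤ N⁻¹ * ∑ t ∈ range (T+1), φ |vh t - v t| :=
      mul_le_mul_of_nonneg_left hbadcard (by positivity)
    have h2 : N⁻¹ * (bad.card:ℝ) * φ δ < ε * φ δ := by rw [mul_assoc]; exact lt_of_le_of_lt h1 hb
    exact lt_of_mul_lt_mul_right h2 hφδ.le
  have hcl := abs_lt.1 hc
  -- upper comparison
  have hupper : ∑ t ∈ range (T+1), (if vh t < vh T then (1:ℝ) else 0)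
      ≤ (∑ t ∈ range (T+1), (if v t < v T + 2*δ then (1:ℝ) else 0)) + bad.card := by
    have hpt : ∀ t ∈ range (T+1), (if vh t < vh T then (1:ℝ) else 0)
        ≤ (if v t < v T + 2*δ then (1:ℝ) else 0) + (if δ ≤ |vh t - v t| then (1:ℝ) else 0) := by
      intro t _
      by_cases hbt : δ ≤ |vh t - v t|
      · simp only [hbt, if_true]
        split_ifs <;> norm_num
      · push_neg at hbt
        have hbt' := abs_lt.1 hbt
        by_cases h2 : vh t < vh T
        · have : v t < v T + 2*δ := by linarith
          simp only [h2, if_true, this]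
          split_ifs <;> norm_num
        · simp only [h2, if_false]
          split_ifs <;> norm_num
    calc ∑ t ∈ range (T+1), (if vh t < vh T then (1:ℝ) else 0)
        ≤ ∑ t ∈ range (T+1), ((if v t < v T + 2*δ then (1:ℝ) else 0)
            + (if δ ≤ |vh t - v t| then (1:ℝ) else 0)) := sum_le_sum hpt
    _ = (∑ t ∈ range (T+1), (if v t < v T + 2*δ then (1:ℝ) else 0)) + bad.card := by
        rw [sum_add_distrib]; congr 1; rw [hbad]; exact sum_boole _ _
  have hlower : ∑ t ∈ range (T+1), (if v t < v T - 2*δ then (1:ℝ) else 0)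
      ≤ (∑ t ∈ range (T+1), (if vh t < vh T then (1:ℝ) else 0)) + bad.card := by
    have hpt : ∀ t ∈ range (T+1), (if v t < v T - 2*δ then (1:ℝ) else 0)
        ≤ (if vh t < vh T then (1:ℝ) else 0) + (if δ ≤ |vh t - v t| then (1:ℝ) else 0) := by
      intro t _
      by_cases hbt : δ ≤ |vh t - v t|
      · simp only [hbt, if_true]
        split_ifs <;> norm_num
      · push_neg at hbt
        have hbt' := abs_lt.1 hbt
        by_cases h2 : v t < v T - 2*δ
        · have : vh t < vh T := by linarith
          simp only [h2, if_true, this]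
          split_ifs <;> norm_num
        · simp only [h2, if_false]
          split_ifs <;> norm_num
    calc ∑ t ∈ range (T+1), (if v t < v T - 2*δ then (1:ℝ) else 0)
        ≤ ∑ t ∈ range (T+1), ((if vh t < vh T then (1:ℝ) else 0)
            + (if δ ≤ |vh t - v t| then (1:ℝ) else 0)) := sum_le_sum hpt
    _ = _ := by rw [sum_add_distrib]; congr 1; rw [hbad]; exact sum_boole _ _
  -- flip the indicator
  have hflip : ∑ t ∈ range (T+1), (if vh T ≤ vh t then (1:ℝ) else 0)
      = N - ∑ t ∈ range (T+1), (if vh t < vh T then (1:ℝ) else 0) := by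
    rw [eq_sub_iff_add_eq, ← sum_add_distrib]
    have : ∀ t ∈ range (T+1), (if vh T ≤ vh t then (1:ℝ) else 0)
        + (if vh t < vh T then (1:ℝ) else 0) = 1 := by
      intro t _
      rcases le_or_gt (vh T) (vh t) with h | h
      · simp [h, not_lt.2 h]
      · simp [h, not_le.2 h]
    rw [sum_congr rfl this, sum_const, card_range, nsmul_eq_mul, mul_one, hN]
    push_cast; ring
  set Fhat : ℝ := N⁻¹ * ∑ t ∈ range (T+1), (if vh t < vh T then (1:ℝ) else 0) with hFhat
  have hgoal : N⁻¹ * ∑ t ∈ range (T+1), (if vh T ≤ vh t then (1:ℝ) else 0) = 1 - Fhat := by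
    rw [hflip, mul_sub, inv_mul_cancel₀ hNpos.ne', hFhat]
  have haup := abs_lt.1 (ha (v T + 2*δ))
  have halo := abs_lt.1 (ha (v T - 2*δ))
  have hlipup := abs_le.1 (hlip (v T + 2*δ) (v T))
  have hliplo := abs_le.1 (hlip (v T - 2*δ) (v T))
  have habs1 : |v T + 2*δ - v T| = 2*δ := by rw [abs_of_nonneg] <;> linarith
  have habs2 : |v T - 2*δ - v T| = 2*δ := by rw [abs_of_nonpos] <;> linarith
  rw [habs1] at hlipup; rw [habs2] at hliplo
  -- multiply sums comparisons by N⁻¹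
  have hmul1 : Fhat ≤ N⁻¹ * ((∑ t ∈ range (T+1), (if v t < v T + 2*δ then (1:ℝ) else 0)) + bad.card) :=
    mul_le_mul_of_nonneg_left hupper (by positivity)
  have hmul2 : N⁻¹ * ((∑ t ∈ range (T+1), (if v t < v T - 2*δ then (1:ℝ) else 0)))
      ≤ Fhat + N⁻¹ * bad.card := by
    have := mul_le_mul_of_nonneg_left hlower (show (0:ℝ) ≤ N⁻¹ by positivity)
    rw [mul_add] at this
    exact this
  rw [mul_add] at hmul1
  rw [hgoal]
  have h1 : Fhat ≤ G (v T) + 2*(ε + W*δ) := by linarith [hlipup.2]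
  have h2 : G (v T) - 2*(ε + W*δ) ≤ Fhat := by linarith [hliplo.1]
  rw [abs_le]; constructor <;> linarith


private lemma dcp_quantile (G : ℝ → ℝ) (W u : ℝ) (hW : 0 ≤ W)
    (hlip : ∀ v1 v2 : ℝ, |G v1 - G v2| ≤ W * |v1 - v2|)
    (hmono : Monotone G)
    (h1 : ∃ x, G x < u) (h2 : ∃ x, u < G x) :
    ∃ s : ℝ, G s = u ∧ (∀ x, G x < u → x ≤ s) ∧ (∀ x, x < s → G x < u) := by
  obtain ⟨x₂, hx₂⟩ := h2
  have hne : {x : ℝ | G x < u}.Nonempty := h1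
  have hbdd : BddAbove {x : ℝ | G x < u} := by
    refine ⟨x₂, fun x hx => ?_⟩
    by_contra h
    push_neg at h
    exact absurd (hmono h.le) (not_le.2 (lt_trans hx hx₂))
  set s : ℝ := sSup {x : ℝ | G x < u} with hs
  have prop2 : ∀ x, G x < u → x ≤ s := fun x hx => le_csSup hbdd hx
  have prop3 : ∀ x, x < s → G x < u := by
    intro x hx
    obtain ⟨x', hx', hlt⟩ := exists_lt_of_lt_csSup hne hx
    exact lt_of_le_of_lt (hmono hlt.le) hx'
  refine ⟨s, ?_, prop2, prop3⟩
  have hle : G s ≤ u := by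
    by_contra h
    push_neg at h
    set η : ℝ := (G s - u) / (W + 1) with hη
    have hηpos : 0 < η := div_pos (by linarith) (by linarith)
    obtain ⟨x', hx', hlt⟩ := exists_lt_of_lt_csSup hne (show s - η < s by linarith)
    have hx's : x' ≤ s := le_csSup hbdd hx'
    have hl := abs_le.1 (hlip s x')
    have habs : |s - x'| ≤ η := by rw [abs_of_nonneg (by linarith)]; linarith
    have hWs : W * |s - x'| ≤ W * η := mul_le_mul_of_nonneg_left habs hW
    have hkey : W * η + η = G s - u := by rw [hη]; field_simp
    have : G s ≤ G x' + W * |s - x'| := by linarith [hl.2]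
    have : G s ≤ G x' + W * η := by linarith
    have : G s < u + W * η := by linarith [hx'.out]
    linarith
  have hge : u ≤ G s := by
    by_contra h
    push_neg at h
    set d : ℝ := (u - G s) / (W + 1) with hd
    have hdpos : 0 < d := div_pos (by linarith) (by linarith)
    have hnot : s + d ∉ {x : ℝ | G x < u} := by
      intro hmem
      have := le_csSup hbdd hmem
      linarith
    have hu : u ≤ G (s + d) := not_lt.1 hnot
    have hl := abs_le.1 (hlip (s + d) s)
    have habs : |s + d - s| = d := by rw [abs_of_nonneg (by linarith)]; ring
    rw [habs] at hl
    have hkey : W * d + d = u - G s := by rw [hd]; field_simp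
    linarith [hl.2]
  linarith


/-- Asymptotic unconditional validity of full distributional conformal prediction
(Theorem 2): under the assumptions of the basic consistency lemma, the coverage
probability of the conformal prediction set `Ĉ = {y : p̂(y) > α}` converges to `1 − α`.
Here `S T t y ω` is the estimated conformity score `V̂_t^{(y)}` of observation `t`
computed from the augmented data with trial value `y`, `Ylast T` is the test outcome
`Y_{T+1}`, and the event below is exactly `{Y_{T+1} ∈ Ĉ(X_{T+1})}`. For sample size
index `T`, observations are `t ∈ {0, …, T}` with `t = T` the test point. -/
theorem stmt5 {Ω : Type*} [MeasurableSpace Ω] (μ : Measure Ω) [IsProbabilityMeasure μ]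
    (S : ℕ → ℕ → ℝ → Ω → ℝ) (Ylast : ℕ → Ω → ℝ)
    (V Vhat : ℕ → ℕ → Ω → ℝ) (G : ℝ → ℝ) (φ : ℝ → ℝ) (W α : ℝ)
    (hα : α ∈ Set.Ioo (0:ℝ) 1)
    -- the estimated scores entering the assumptions are those at the true test value
    (hVhat : ∀ T t ω, Vhat T t ω = S T t (Ylast T ω) ω)
    -- G is the CDF of the oracle score of the test point
    (hG_cdf : ∀ T v, G v = (μ {ω | V T T ω ≤ v}).toReal)
    -- G is Lipschitz
    (hG_lip : ∀ v1 v2 : ℝ, |G v1 - G v2| ≤ W * |v1 - v2|)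
    -- uniform convergence in probability of the empirical CDF of the oracle scores
    (h_emp : ∀ ε > (0:ℝ), Tendsto (fun (T : ℕ) => μ {ω | ∃ v : ℝ,
        ε ≤ |((T:ℝ) + 1)⁻¹ * ∑ t ∈ range (T + 1), (if V T t ω < v then (1:ℝ) else 0) - G v|})
      atTop (nhds 0))
    -- φ is strictly increasing and continuous with φ(0) = 0
    (hφ0 : φ 0 = 0) (hφmono : StrictMonoOn φ (Set.Ici 0)) (hφcont : Continuous φ)
    -- aggregate consistency of the estimated scores
    (h_est : ∀ ε > (0:ℝ), Tendsto (fun (T : ℕ) => μ {ω |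
        ε ≤ ((T:ℝ) + 1)⁻¹ * ∑ t ∈ range (T + 1), φ |Vhat T t ω - V T t ω|})
      atTop (nhds 0))
    -- consistency of the estimated test score
    (h_last : ∀ ε > (0:ℝ), Tendsto (fun (T : ℕ) => μ {ω | ε ≤ |Vhat T T ω - V T T ω|})
      atTop (nhds 0)) :
    -- coverage: P(Y_{T+1} ∈ Ĉ(X_{T+1})) = P(p̂(Y_{T+1}) > α) → 1 − α
    Tendsto (fun (T : ℕ) => (μ {ω | α < ((T:ℝ) + 1)⁻¹ * ∑ t ∈ range (T + 1),
        (if S T T (Ylast T ω) ω ≤ S T t (Ylast T ω) ω then (1:ℝ) else 0)}).toReal)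
      atTop (nhds (1 - α)) := by
  simp only [← hVhat]
  obtain ⟨hα0, hα1⟩ := hα
  -- G is monotone, nonneg
  have hGmono : Monotone G := by
    intro x y hxy
    rw [hG_cdf 0 x, hG_cdf 0 y]
    exact ENNReal.toReal_mono (measure_ne_top μ _)
      (measure_mono (fun ω (hω : V 0 0 ω ≤ x) => le_trans hω hxy))
  have hGnonneg : ∀ x, 0 ≤ G x := fun x => by rw [hG_cdf 0 x]; exact ENNReal.toReal_nonneg
  -- existence of small and large values of G, via h_emp
  have hexlt : ∀ u : ℝ, 0 < u → ∃ x, G x < u := by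
    intro u hu
    by_contra hcon
    push_neg at hcon
    have hall : ∀ T : ℕ, {ω : Ω | ∃ v : ℝ, u ≤ |((T:ℝ) + 1)⁻¹ *
        ∑ t ∈ range (T + 1), (if V T t ω < v then (1:ℝ) else 0) - G v|} = Set.univ := by
      intro T
      ext ω
      simp only [Set.mem_setOf_eq, Set.mem_univ, iff_true]
      refine ⟨(range (T+1)).inf' ⟨0, mem_range.2 (Nat.succ_pos T)⟩ (fun t => V T t ω), ?_⟩
      have hz : ∀ t ∈ range (T+1),
          ¬ (V T t ω < (range (T+1)).inf' ⟨0, mem_range.2 (Nat.succ_pos T)⟩ (fun t => V T t ω)) :=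
        fun t ht => not_lt.2 (inf'_le _ ht)
      rw [sum_congr rfl (fun t ht => if_neg (hz t ht)), sum_const_zero, mul_zero, zero_sub,
        abs_neg, abs_of_nonneg (hGnonneg _)]
      exact hcon _
    have h1 := h_emp u hu
    simp only [hall, measure_univ] at h1
    exact zero_ne_one (tendsto_nhds_unique h1 tendsto_const_nhds)
  have hexgt : ∀ u : ℝ, u < 1 → ∃ x, u < G x := by
    intro u hu
    by_contra hcon
    push_neg at hcon
    have hall : ∀ T : ℕ, {ω : Ω | ∃ v : ℝ, (1 - u) ≤ |((T:ℝ) + 1)⁻¹ *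
        ∑ t ∈ range (T + 1), (if V T t ω < v then (1:ℝ) else 0) - G v|} = Set.univ := by
      intro T
      ext ω
      simp only [Set.mem_setOf_eq, Set.mem_univ, iff_true]
      set M : ℝ := (range (T+1)).sup' ⟨0, mem_range.2 (Nat.succ_pos T)⟩ (fun t => V T t ω) + 1
        with hM
      refine ⟨M, ?_⟩
      have hz : ∀ t ∈ range (T+1), V T t ω < M := by
        intro t ht
        have := le_sup' (fun t => V T t ω) ht
        rw [hM]; linarith
      rw [sum_congr rfl (fun t ht => if_pos (hz t ht)), sum_const, card_range, nsmul_eq_mul,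
        mul_one]
      have hNe : ((T:ℝ) + 1) ≠ 0 := by positivity
      have hone : ((T:ℝ)+1)⁻¹ * (((T+1 : ℕ)):ℝ) = 1 := by
        push_cast
        rw [inv_mul_cancel₀ hNe]
      rw [hone, abs_of_nonneg (by linarith [hcon M])]
      linarith [hcon M]
    have h1 := h_emp (1 - u) (by linarith)
    simp only [hall, measure_univ] at h1
    exact zero_ne_one (tendsto_nhds_unique h1 tendsto_const_nhds)
  -- W > 0
  have hW0 : 0 < W := by
    obtain ⟨x₁, hx₁⟩ := hexlt (1/2) (by norm_num)
    obtain ⟨x₂, hx₂⟩ := hexgt (1/2) (by norm_num)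
    have h1 := hG_lip x₁ x₂
    have h2 : 0 < |G x₁ - G x₂| := abs_pos.2 (by linarith)
    have h3 : x₁ ≠ x₂ := fun h => by rw [h] at hx₁; linarith
    have h4 : 0 < |x₁ - x₂| := abs_pos.2 (sub_ne_zero.2 h3)
    by_contra hW
    push_neg at hW
    nlinarith [abs_nonneg (x₁ - x₂)]
  -- main epsilon argument
  rw [Metric.tendsto_atTop]
  intro ε₀ hε₀
  set ε : ℝ := min (ε₀/12) (min α (1-α)/8) with hε
  have hεpos : 0 < ε := by
    apply lt_min (by linarith)
    have : 0 < min α (1-α) := lt_min hα0 (by linarith)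
    linarith
  have hε12 : ε ≤ ε₀/12 := min_le_left _ _
  have hεα : 4*ε < α := by
    have h1 : ε ≤ min α (1-α)/8 := min_le_right _ _
    have h2 : min α (1-α) ≤ α := min_le_left _ _
    linarith
  have hεα' : 4*ε < 1 - α := by
    have h1 : ε ≤ min α (1-α)/8 := min_le_right _ _
    have h2 : min α (1-α) ≤ 1-α := min_le_right _ _
    linarith
  have hεα'' : 8*ε ≤ 1 - α := by
    have h1 : ε ≤ min α (1-α)/8 := min_le_right _ _
    have h2 : min α (1-α) ≤ 1-α := min_le_right _ _
    linarith
  set δ : ℝ := ε / W with hδdef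
  have hδpos : 0 < δ := div_pos hεpos hW0
  have hWδ : W * δ = ε := by rw [hδdef]; field_simp
  set ε' : ℝ := ε / W with hε'def
  have hε'pos : 0 < ε' := div_pos hεpos hW0
  have hWε' : W * ε' = ε := by rw [hε'def]; field_simp
  set u_hi : ℝ := 1 - α + 4*ε with hu_hi
  set u_lo : ℝ := 1 - α - 4*ε with hu_lo
  have hu_hi0 : 0 < u_hi := by rw [hu_hi]; linarith
  have hu_hi1 : u_hi < 1 := by rw [hu_hi]; linarith
  have hu_lo0 : 0 < u_lo := by rw [hu_lo]; linarith
  have hu_lo1 : u_lo < 1 := by rw [hu_lo]; linarith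
  obtain ⟨s_hi, hs_hi1, hs_hi2, _⟩ := dcp_quantile G W u_hi hW0.le hG_lip hGmono
    (hexlt u_hi hu_hi0) (hexgt u_hi hu_hi1)
  obtain ⟨s_lo, hs_lo1, _, hs_lo3⟩ := dcp_quantile G W u_lo hW0.le hG_lip hGmono
    (hexlt u_lo hu_lo0) (hexgt u_lo hu_lo1)
  -- measure bounds for the uniform variable
  have hup : ∀ T : ℕ, μ {ω | G (V T T ω) < u_hi} ≤ ENNReal.ofReal u_hi := by
    intro T
    calc μ {ω | G (V T T ω) < u_hi} ≤ μ {ω | V T T ω ≤ s_hi} :=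
          measure_mono (fun ω hω => hs_hi2 _ hω)
    _ = ENNReal.ofReal u_hi := by
        rw [← hs_hi1, hG_cdf T s_hi, ENNReal.ofReal_toReal (measure_ne_top μ _)]
  have hlo : ∀ T : ℕ, ENNReal.ofReal (u_lo - ε) ≤ μ {ω | G (V T T ω) < u_lo} := by
    intro T
    have hGs : u_lo - ε ≤ G (s_lo - ε') := by
      have hl := abs_le.1 (hG_lip s_lo (s_lo - ε'))
      have habs : |s_lo - (s_lo - ε')| = ε' := by rw [abs_of_nonneg (by linarith)]; ring
      rw [habs] at hl
      have := hl.2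
      rw [hWε'] at this
      linarith [hs_lo1 ▸ this]
    calc ENNReal.ofReal (u_lo - ε) ≤ ENNReal.ofReal (G (s_lo - ε')) :=
          ENNReal.ofReal_le_ofReal hGs
    _ = μ {ω | V T T ω ≤ s_lo - ε'} := by
        rw [hG_cdf T (s_lo - ε'), ENNReal.ofReal_toReal (measure_ne_top μ _)]
    _ ≤ μ {ω | G (V T T ω) < u_lo} := by
        refine measure_mono (fun ω hω => ?_)
        exact hs_lo3 _ (lt_of_le_of_lt hω (by linarith))
  -- eventual smallness of the bad events
  have hφδ : 0 < φ δ := by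
    have := hφmono Set.self_mem_Ici (Set.mem_Ici.2 hδpos.le) hδpos
    rwa [hφ0] at this
  have hofpos : (0:ENNReal) < ENNReal.ofReal (ε₀/6) := ENNReal.ofReal_pos.2 (by linarith)
  have hA := (h_emp ε hεpos).eventually_lt_const hofpos
  have hB := (h_est (ε * φ δ) (by positivity)).eventually_lt_const hofpos
  have hC := (h_last δ hδpos).eventually_lt_const hofpos
  obtain ⟨N₀, hN₀⟩ := eventually_atTop.1 ((hA.and hB).and hC)
  refine ⟨N₀, fun T hT => ?_⟩
  obtain ⟨⟨hAT, hBT⟩, hCT⟩ := hN₀ T hT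
  -- the bad event
  set Abad : Set Ω := {ω | ∃ v : ℝ, ε ≤ |((T:ℝ) + 1)⁻¹ *
      ∑ t ∈ range (T + 1), (if V T t ω < v then (1:ℝ) else 0) - G v|} with hAbad
  set Bbad : Set Ω := {ω | ε * φ δ ≤ ((T:ℝ) + 1)⁻¹ *
      ∑ t ∈ range (T + 1), φ |Vhat T t ω - V T t ω|} with hBbad
  set Cbad : Set Ω := {ω | δ ≤ |Vhat T T ω - V T T ω|} with hCbad
  set bad : Set Ω := Abad ∪ Bbad ∪ Cbad with hbad
  have hbadmeas : μ bad < ENNReal.ofReal (ε₀/2) := by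
    calc μ bad ≤ μ (Abad ∪ Bbad) + μ Cbad := measure_union_le _ _
    _ ≤ μ Abad + μ Bbad + μ Cbad := by
        exact add_le_add_left (measure_union_le _ _) _
    _ < ENNReal.ofReal (ε₀/6) + ENNReal.ofReal (ε₀/6) + ENNReal.ofReal (ε₀/6) := by
        exact ENNReal.add_lt_add (ENNReal.add_lt_add hAT hBT) hCT
    _ = ENNReal.ofReal (ε₀/2) := by
        rw [← ENNReal.ofReal_add (by linarith) (by linarith),
          ← ENNReal.ofReal_add (by linarith) (by linarith)]
        congr 1
        ring
  have hbadR : (μ bad).toReal < ε₀/2 := by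
    rw [← ENNReal.ofReal_toReal (measure_ne_top μ bad)] at hbadmeas
    have := (ENNReal.ofReal_lt_ofReal_iff (by linarith)).1 hbadmeas
    exact this
  -- core estimate on the good event
  set E : Set Ω := {ω | α < ((T:ℝ) + 1)⁻¹ * ∑ t ∈ range (T + 1),
      (if Vhat T T ω ≤ Vhat T t ω then (1:ℝ) else 0)} with hE
  have hcore : ∀ ω, ω ∉ bad →
      |((T:ℝ) + 1)⁻¹ * (∑ t ∈ range (T + 1), (if Vhat T T ω ≤ Vhat T t ω then (1:ℝ) else 0))
        - (1 - G (V T T ω))| ≤ 4*ε := by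
    intro ω hω
    rw [hbad, Set.mem_union, Set.mem_union] at hω
    push_neg at hω
    obtain ⟨⟨hωA, hωB⟩, hωC⟩ := hω
    have haA : ∀ x : ℝ, |((T:ℝ)+1)⁻¹ * ∑ t ∈ range (T+1),
        (if V T t ω < x then (1:ℝ) else 0) - G x| < ε := by
      intro x
      by_contra hcc
      push_neg at hcc
      exact hωA ⟨x, hcc⟩
    have hbB : ((T:ℝ)+1)⁻¹ * ∑ t ∈ range (T+1), φ |Vhat T t ω - V T t ω| < ε * φ δ :=
      not_le.1 hωB
    have hcC : |Vhat T T ω - V T T ω| < δ := not_le.1 hωC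
    have := dcp_core T (fun t => V T t ω) (fun t => Vhat T t ω) G φ W ε δ hδpos hW0.le
      hG_lip hφ0 hφmono haA hbB hcC
    calc _ ≤ 2*(ε + W*δ) := this
    _ = 4*ε := by rw [hWδ]; ring
  have hEu : E ⊆ {ω | G (V T T ω) < u_hi} ∪ bad := by
    intro ω hω
    by_cases hb : ω ∈ bad
    · exact Or.inr hb
    · left
      have h1 := (abs_le.1 (hcore ω hb)).2
      have h2 : α < ((T:ℝ) + 1)⁻¹ * ∑ t ∈ range (T + 1),
          (if Vhat T T ω ≤ Vhat T t ω then (1:ℝ) else 0) := hω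
      show G (V T T ω) < u_hi
      rw [hu_hi]; linarith
  have hEl : {ω | G (V T T ω) < u_lo} ⊆ E ∪ bad := by
    intro ω hω
    by_cases hb : ω ∈ bad
    · exact Or.inr hb
    · left
      have h1 := (abs_le.1 (hcore ω hb)).1
      have h2 : G (V T T ω) < u_lo := hω
      show α < ((T:ℝ) + 1)⁻¹ * ∑ t ∈ range (T + 1),
          (if Vhat T T ω ≤ Vhat T t ω then (1:ℝ) else 0)
      rw [hu_lo] at h2; linarith
  -- measure comparisons
  have hup2 : (μ E).toReal ≤ u_hi + (μ bad).toReal := by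
    have h1 : μ E ≤ ENNReal.ofReal u_hi + μ bad :=
      le_trans (measure_mono hEu) (le_trans (measure_union_le _ _)
        (add_le_add_left (hup T) _))
    have h2 := ENNReal.toReal_mono (by finiteness) h1
    rwa [ENNReal.toReal_add (by finiteness) (measure_ne_top μ bad),
      ENNReal.toReal_ofReal hu_hi0.le] at h2
  have hlo2 : u_lo - ε - (μ bad).toReal ≤ (μ E).toReal := by
    have h1 : ENNReal.ofReal (u_lo - ε) ≤ μ E + μ bad :=
      le_trans (hlo T) (le_trans (measure_mono hEl) (measure_union_le _ _))
    have h2 := ENNReal.toReal_mono (by finiteness) h1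
    rw [ENNReal.toReal_ofReal (by rw [hu_lo]; linarith [hεα'', hεpos] : (0:ℝ) ≤ u_lo - ε),
      ENNReal.toReal_add (measure_ne_top μ E) (measure_ne_top μ bad)] at h2
    linarith
  rw [Real.dist_eq, abs_lt]
  constructor
  · rw [hu_lo] at hlo2; linarith
  · rw [hu_hi] at hup2; linarith
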